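/- Let A be a nearly free line arrangement in ℂ³ with exponents (a, b), a ≤ b. Then for every H ∈ A, n_H ≤ b + 1. -/

import Mathlib

noncomputable section

open MvPolynomial

/-- The polynomial ring `S = ℂ[x,y,z]`. -/
abbrev S3 : Type := MvPolynomial (Fin 3) ℂ
/-- The polynomial ring in two variables, coordinate ring of a plane `H`. -/
abbrev S2 : Type := MvPolynomial (Fin 2) ℂ

/-- The linear form with coefficient vector `v`. -/
def lin3 (v : Fin 3 → ℂ) : S3 := ∑ i, MvPolynomial.C (v i) * MvPolynomial.X i
/-- The linear form with coefficient vector `u` in two variables. -/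
def lin2 (u : Fin 2 → ℂ) : S2 := ∑ i, MvPolynomial.C (u i) * MvPolynomial.X i

/-- Value of the derivation `θ = ∑ θᵢ ∂ᵢ` on the linear form with coefficients `v`. -/
def ev3 (θ : Fin 3 → S3) (v : Fin 3 → ℂ) : S3 := ∑ i, MvPolynomial.C (v i) * θ i
/-- Two-variable analogue of `ev3`. -/
def ev2 (θ : Fin 2 → S2) (u : Fin 2 → ℂ) : S2 := ∑ i, MvPolynomial.C (u i) * θ i

lemma ev3_add (θ η : Fin 3 → S3) (v : Fin 3 → ℂ) :
    ev3 (θ + η) v = ev3 θ v + ev3 η v := by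
  simp [ev3, mul_add, Finset.sum_add_distrib]

lemma ev3_smul (c : S3) (θ : Fin 3 → S3) (v : Fin 3 → ℂ) :
    ev3 (c • θ) v = c * ev3 θ v := by
  simp only [ev3, Pi.smul_apply, smul_eq_mul, Finset.mul_sum]
  exact Finset.sum_congr rfl fun i _ => by ring

lemma ev2_add (θ η : Fin 2 → S2) (u : Fin 2 → ℂ) :
    ev2 (θ + η) u = ev2 θ u + ev2 η u := by
  simp [ev2, mul_add, Finset.sum_add_distrib]

lemma ev2_smul (c : S2) (θ : Fin 2 → S2) (u : Fin 2 → ℂ) :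
    ev2 (c • θ) u = c * ev2 θ u := by
  simp only [ev2, Pi.smul_apply, smul_eq_mul, Finset.mul_sum]
  exact Finset.sum_congr rfl fun i _ => by ring

/-- A central line arrangement in `ℂ³`, given by the coefficient vectors of the defining
linear forms of its planes; the forms are nonzero and pairwise non-proportional. -/
structure Arr where
  hyps : Finset (Fin 3 → ℂ)
  forms_ne : ∀ v ∈ hyps, v ≠ 0
  nonprop : ∀ v ∈ hyps, ∀ w ∈ hyps, (∃ c : ℂ, w = c • v) → w = v

/-- The module `D(A)` of logarithmic derivations of the arrangement `A`, as a submodule of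
`Der S = S ∂x ⊕ S ∂y ⊕ S ∂z` (a derivation is recorded by its coefficient triple). -/
def DA (A : Arr) : Submodule S3 (Fin 3 → S3) where
  carrier := {θ | ∀ v ∈ A.hyps, lin3 v ∣ ev3 θ v}
  add_mem' := fun hθ hη v hv => by rw [ev3_add]; exact dvd_add (hθ v hv) (hη v hv)
  zero_mem' := fun v hv => by simp [ev3]
  smul_mem' := fun c θ hθ v hv => by rw [ev3_smul]; exact Dvd.dvd.mul_left (hθ v hv) c

/-- The Euler derivation `θ_E = x ∂x + y ∂y + z ∂z`. -/
def eulerD : Fin 3 → S3 := fun i => MvPolynomial.X i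

/-- The submodule `D_H(A) = {θ ∈ D(A) | θ(α_H) = 0}`, where `H` has coefficient vector `v`. -/
def DH (A : Arr) (v : Fin 3 → ℂ) : Submodule S3 (Fin 3 → S3) where
  carrier := {θ | (∀ w ∈ A.hyps, lin3 w ∣ ev3 θ w) ∧ ev3 θ v = 0}
  add_mem' := fun hθ hη => ⟨fun w hw => by rw [ev3_add]; exact dvd_add (hθ.1 w hw) (hη.1 w hw),
    by rw [ev3_add, hθ.2, hη.2, add_zero]⟩
  zero_mem' := ⟨fun w hw => by simp [ev3], by simp [ev3]⟩
  smul_mem' := fun c θ hθ => ⟨fun w hw => by rw [ev3_smul]; exact Dvd.dvd.mul_left (hθ.1 w hw) c,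
    by rw [ev3_smul, hθ.2, mul_zero]⟩

/-- A derivation is homogeneous of (polynomial) degree `k` if all its coefficients are. -/
def HomDeg3 (θ : Fin 3 → S3) (k : ℕ) : Prop := ∀ i, (θ i).IsHomogeneous k
/-- Two-variable analogue of `HomDeg3`. -/
def HomDeg2 (θ : Fin 2 → S2) (k : ℕ) : Prop := ∀ i, (θ i).IsHomogeneous k

/-- `A` is plus-one generated with exponents `(a, b)` and level `d`: `D(A)` has a minimal
homogeneous generating set `{θ_E, θ₂, θ₃, φ}` of degrees `1, a, b, d` with a unique
homogeneous relation `f₁θ_E + f₂θ₂ + f₃θ₃ + αφ = 0`, `α` a nonzero linear form. -/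
def IsPOG (A : Arr) (a b d : ℕ) : Prop :=
  ∃ θ₂ θ₃ φ : Fin 3 → S3,
    HomDeg3 θ₂ a ∧ HomDeg3 θ₃ b ∧ HomDeg3 φ d ∧
    Submodule.span S3 ({eulerD, θ₂, θ₃, φ} : Set (Fin 3 → S3)) = DA A ∧
    eulerD ∉ Submodule.span S3 ({θ₂, θ₃, φ} : Set (Fin 3 → S3)) ∧
    θ₂ ∉ Submodule.span S3 ({eulerD, θ₃, φ} : Set (Fin 3 → S3)) ∧
    θ₃ ∉ Submodule.span S3 ({eulerD, θ₂, φ} : Set (Fin 3 → S3)) ∧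
    φ ∉ Submodule.span S3 ({eulerD, θ₂, θ₃} : Set (Fin 3 → S3)) ∧
    ∃ f₁ f₂ f₃ α : S3, α ≠ 0 ∧ α.IsHomogeneous 1 ∧
      f₁ • eulerD + f₂ • θ₂ + f₃ • θ₃ + α • φ = 0 ∧
      ∀ g₁ g₂ g₃ g₄ : S3,
        g₁ • eulerD + g₂ • θ₂ + g₃ • θ₃ + g₄ • φ = 0 →
        ∃ h : S3, g₁ = h * f₁ ∧ g₂ = h * f₂ ∧ g₃ = h * f₃ ∧ g₄ = h * α

/-- `A` is nearly free with exponents `(a, b)`: plus-one generated with level `d = b`. -/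
def IsNearlyFree (A : Arr) (a b : ℕ) : Prop := IsPOG A a b b

/-- `A` is free with exponents `(1, a, b)`: `D(A)` has a homogeneous basis
`{θ_E, θ₁, θ₂}` of degrees `1, a, b`. -/
def IsFree (A : Arr) (a b : ℕ) : Prop :=
  ∃ θ₁ θ₂ : Fin 3 → S3, HomDeg3 θ₁ a ∧ HomDeg3 θ₂ b ∧
    Submodule.span S3 ({eulerD, θ₁, θ₂} : Set (Fin 3 → S3)) = DA A ∧
    ∀ f g h : S3, f • eulerD + g • θ₁ + h • θ₂ = 0 → f = 0 ∧ g = 0 ∧ h = 0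

/-- The projective plane `ℙ² = ℙ(ℂ³)`. -/
abbrev PP : Type := Projectivization ℂ (Fin 3 → ℂ)

/-- The projective point `p` lies on the line defined by the linear form with coefficients `v`. -/
def pOn (v : Fin 3 → ℂ) (p : PP) : Prop := ∑ i, v i * p.rep i = 0

/-- The number `n_H` of intersection points of `A` lying on the line `H` (coefficients `v`). -/
def nPoints (A : Arr) (v : Fin 3 → ℂ) : ℕ :=
  Set.ncard {p : PP | pOn v p ∧ ∃ w ∈ A.hyps, w ≠ v ∧ pOn w p}

/-- The multiplicity `m(X)` of a projective point: the number of lines of `A` through it. -/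
def multPt (A : Arr) (p : PP) : ℕ :=
  Set.ncard {w : Fin 3 → ℂ | w ∈ A.hyps ∧ pOn w p}

/-- The maximal multiplicity `m(A)` of an intersection point of `A`. -/
def mMax (A : Arr) : ℕ := ⨆ p : PP, multPt A p

/-- `b₂⁰(A)`, the constant coefficient of `χ₀(A,t) = χ(A,t)/(t-1) = t² - (|A|-1)t + b₂⁰(A)`. -/
def b20 (A : Arr) : ℕ := (∑ᶠ p : PP, (multPt A p - 1)) - (A.hyps.card - 1)

/-- Deletion of a hyperplane from an arrangement. -/
def Arr.delete (A : Arr) (v : Fin 3 → ℂ) : Arr where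
  hyps := A.hyps.erase v
  forms_ne := fun w hw => A.forms_ne w (Finset.mem_of_mem_erase hw)
  nonprop := fun w hw u hu h =>
    A.nonprop w (Finset.mem_of_mem_erase hw) u (Finset.mem_of_mem_erase hu) h

/-- The restriction of the linear form `w` to the plane with basis `b`. -/
def restrForm (b : Fin 2 → Fin 3 → ℂ) (w : Fin 3 → ℂ) : Fin 2 → ℂ :=
  fun j => ∑ i, w i * b j i

/-- The Ziegler multiplicity of the point `H ∩ H_w` on the line `H` (coefficients `v`):
the number of hyperplanes of `A` other than `H` passing through this point. -/
def multOn (A : Arr) (v : Fin 3 → ℂ) (b : Fin 2 → Fin 3 → ℂ) (w : Fin 3 → ℂ) : ℕ :=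
  Set.ncard {w' : Fin 3 → ℂ | w' ∈ A.hyps ∧ w' ≠ v ∧
    ∃ c : ℂ, restrForm b w' = c • restrForm b w}

/-- The derivation module `D(A^H, m^H)` of the Ziegler (multi)restriction of `A` onto the
line with coefficients `v`, computed in the coordinates given by the basis `b` of `H`.
(For `v ∉ A` this is the multirestriction with multiplicities `m(X) = #{K ∈ A | X ⊂ K}`.) -/
def DZ (A : Arr) (v : Fin 3 → ℂ) (b : Fin 2 → Fin 3 → ℂ) : Submodule S2 (Fin 2 → S2) where
  carrier := {θ | ∀ w ∈ A.hyps, w ≠ v →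
    (lin2 (restrForm b w)) ^ (multOn A v b w) ∣ ev2 θ (restrForm b w)}
  add_mem' := fun hθ hη w hw hwv => by rw [ev2_add]; exact dvd_add (hθ w hw hwv) (hη w hw hwv)
  zero_mem' := fun w hw hwv => by simp [ev2]
  smul_mem' := fun c θ hθ w hw hwv => by rw [ev2_smul]; exact Dvd.dvd.mul_left (hθ w hw hwv) c

/-- `(e₁, e₂)` is the splitting type of the logarithmic bundle of `A` along the line `v`;
by Yoshinaga's theorem this is expressed through the exponents of the corresponding
(multi)restriction: `D(A^H, m^H)` has a homogeneous basis of degrees `e₁`, `e₂`. -/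
def SplitTypeIs (A : Arr) (v : Fin 3 → ℂ) (e₁ e₂ : ℕ) : Prop :=
  ∃ b : Fin 2 → (Fin 3 → ℂ), LinearIndependent ℂ b ∧ (∀ j, ∑ i, v i * b j i = 0) ∧
    ∃ θ₁ θ₂ : Fin 2 → S2, HomDeg2 θ₁ e₁ ∧ HomDeg2 θ₂ e₂ ∧
      Submodule.span S2 ({θ₁, θ₂} : Set (Fin 2 → S2)) = DZ A v b ∧
      ∀ f g : S2, f • θ₁ + g • θ₂ = 0 → f = 0 ∧ g = 0

/-- For `v ∈ A`, the splitting type along `v` is exactly the pair of exponents of the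
Ziegler restriction `(A^H, m^H)`. -/
abbrev ZieglerExpsAre (A : Arr) (v : Fin 3 → ℂ) (e₁ e₂ : ℕ) : Prop := SplitTypeIs A v e₁ e₂

/-- A generic line arrangement: all intersection points in `ℙ²` are double points. -/
def IsGeneric (A : Arr) : Prop := ∀ p : PP, multPt A p ≤ 2


/-- coefficient extraction for linear forms in two variables -/
lemma linform_coeffs (a b : ℂ) (h : (C a * X 0 + C b * X 1 : S2) = 0) : a = 0 ∧ b = 0 := by
  constructor
  · have := congrArg (MvPolynomial.coeff (Finsupp.single 0 1)) h
    simpa [coeff_add, coeff_C_mul, coeff_X', Finsupp.single_eq_single_iff] using this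
  · have := congrArg (MvPolynomial.coeff (Finsupp.single 1 1)) h
    simpa [coeff_add, coeff_C_mul, coeff_X', Finsupp.single_eq_single_iff] using this

lemma linform_ne_zero {a b : ℂ} (h : ¬(a = 0 ∧ b = 0)) : (C a * X 0 + C b * X 1 : S2) ≠ 0 :=
  fun hz => h (linform_coeffs a b hz)

/-- nonzero linear forms in two variables are prime, case a ≠ 0 -/
lemma linform_prime_aux {a : ℂ} (b : ℂ) (ha : a ≠ 0) : Prime (C a * X 0 + C b * X 1 : S2) := by
  rw [← MulEquiv.prime_iff (MvPolynomial.finSuccEquiv ℂ 1).toRingEquiv.toMulEquiv]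
  have h1 : (MvPolynomial.finSuccEquiv ℂ 1) (C a * X 0 + C b * X 1 : S2)
      = Polynomial.C (C a) * (Polynomial.X - Polynomial.C (-(C (b/a) * X 0))) := by
    have hX1 : (X 1 : S2) = X (Fin.succ 0) := rfl
    rw [map_add, map_mul, map_mul, hX1, finSuccEquiv_X_zero, finSuccEquiv_X_succ]
    have : (MvPolynomial.finSuccEquiv ℂ 1) (C a) = Polynomial.C (C a) := by
      simp [MvPolynomial.finSuccEquiv_apply]
    rw [this]
    have : (MvPolynomial.finSuccEquiv ℂ 1) (C b) = Polynomial.C (C b) := by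
      simp [MvPolynomial.finSuccEquiv_apply]
    rw [this, map_neg, sub_neg_eq_add, mul_add]
    congr 1
    have hb : (C b : MvPolynomial (Fin 1) ℂ) * X 0 = C a * (C (b / a) * X 0) := by
      rw [← mul_assoc, ← map_mul]
      congr 2
      field_simp
    rw [← Polynomial.C_mul, hb, Polynomial.C_mul]
  show Prime ((MvPolynomial.finSuccEquiv ℂ 1) (C a * X 0 + C b * X 1))
  rw [h1]
  have hu : IsUnit (Polynomial.C (C a) : Polynomial (MvPolynomial (Fin 1) ℂ)) :=
    (ha.isUnit.map (C : ℂ →+* MvPolynomial (Fin 1) ℂ)).map Polynomial.C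
  obtain ⟨u, hu⟩ := hu
  rw [← hu]
  exact (associated_unit_mul_left _ _ u.isUnit).symm.prime (Polynomial.prime_X_sub_C _)

lemma linform_prime {a b : ℂ} (h : ¬(a = 0 ∧ b = 0)) : Prime (C a * X 0 + C b * X 1 : S2) := by
  by_cases ha : a = 0
  · have hb : b ≠ 0 := fun hb => h ⟨ha, hb⟩
    have := linform_prime_aux (a := b) a hb
    rw [← MulEquiv.prime_iff (MvPolynomial.renameEquiv ℂ (Equiv.swap (0 : Fin 2) 1)).toRingEquiv.toMulEquiv]
      at this
    have heq : (MvPolynomial.renameEquiv ℂ (Equiv.swap (0 : Fin 2) 1))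
        (C b * X 0 + C a * X 1 : S2) = (C a * X 0 + C b * X 1 : S2) := by
      simp [MvPolynomial.renameEquiv_apply, map_add, map_mul, rename_C, rename_X,
        Equiv.swap_apply_left, Equiv.swap_apply_right]
      ring
    rw [show ((MvPolynomial.renameEquiv ℂ (Equiv.swap (0 : Fin 2) 1)).toRingEquiv.toMulEquiv
        (C b * X 0 + C a * X 1 : S2)) = (C a * X 0 + C b * X 1 : S2) from heq] at this
    exact this
  · exact linform_prime_aux b ha

lemma homog_factor {p q : S2} (hp : p.IsHomogeneous 1) (hp0 : p ≠ 0) (hq0 : q ≠ 0) {n : ℕ}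
    (hpq : (p * q).IsHomogeneous n) : ∃ m, m + 1 = n ∧ q.IsHomogeneous m := by
  have key : ∀ k, homogeneousComponent (k + 1) (p * q) = p * homogeneousComponent k q := by
    intro k
    conv_lhs => rw [← sum_homogeneousComponent q, Finset.mul_sum, map_sum]
    have hterm : ∀ i ∈ Finset.range (q.totalDegree + 1),
        homogeneousComponent (k + 1) (p * homogeneousComponent i q)
        = if i = k then p * homogeneousComponent i q else 0 := by
      intro i _
      have hmem : (p * homogeneousComponent i q) ∈ homogeneousSubmodule (Fin 2) ℂ (1 + i) :=
        (mem_homogeneousSubmodule _ _).mpr (hp.mul (homogeneousComponent_isHomogeneous i q))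
      rw [homogeneousComponent_of_mem hmem]
      simp only [show ((k : ℕ) + 1 = 1 + i) ↔ (i = k) from by omega]
    rw [Finset.sum_congr rfl hterm, Finset.sum_ite_eq' (Finset.range (q.totalDegree + 1))]
    by_cases hk : k ∈ Finset.range (q.totalDegree + 1)
    · rw [if_pos hk]
    · rw [if_neg hk]
      have : homogeneousComponent k q = 0 :=
        homogeneousComponent_eq_zero _ q (by simpa using hk)
      rw [this, mul_zero]
  have hzero : ∀ k, k + 1 ≠ n → homogeneousComponent k q = 0 := by
    intro k hk
    have h1 : homogeneousComponent (k + 1) (p * q) = 0 := by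
      rw [homogeneousComponent_of_mem ((mem_homogeneousSubmodule _ _).mpr hpq), if_neg hk]
    rw [key k] at h1
    exact (mul_eq_zero.mp h1).resolve_left hp0
  obtain ⟨m, rfl⟩ : ∃ m, n = m + 1 := by
    rcases n with - | m
    · exfalso
      apply hq0
      rw [← sum_homogeneousComponent q]
      exact Finset.sum_eq_zero fun i _ => hzero i (by omega)
    · exact ⟨m, rfl⟩
  refine ⟨m, rfl, ?_⟩
  have hq : q = homogeneousComponent m q := by
    conv_lhs => rw [← sum_homogeneousComponent q]
    by_cases hm : m ∈ Finset.range (q.totalDegree + 1)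
    · exact Finset.sum_eq_single_of_mem m hm fun i _ hi => hzero i (by omega)
    · exfalso
      apply hq0
      rw [← sum_homogeneousComponent q]
      refine Finset.sum_eq_zero fun i hi => hzero i ?_
      intro h
      have him : i = m := by omega
      exact hm (him ▸ hi)
  rw [hq]
  exact homogeneousComponent_isHomogeneous m q

/-- abbreviation for the linear form attached to a pair of coefficients -/
def lf (c : ℂ × ℂ) : S2 := C c.1 * X 0 + C c.2 * X 1

lemma lf_ne_zero {c : ℂ × ℂ} (hc : c ≠ 0) : lf c ≠ 0 :=
  linform_ne_zero fun h => hc (Prod.ext h.1 h.2)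

lemma lf_prime {c : ℂ × ℂ} (hc : c ≠ 0) : Prime (lf c) :=
  linform_prime fun h => hc (Prod.ext h.1 h.2)

lemma lf_homog (c : ℂ × ℂ) : (lf c).IsHomogeneous 1 := by
  exact ((isHomogeneous_C _ c.1).mul (isHomogeneous_X _ _)).add
    ((isHomogeneous_C _ c.2).mul (isHomogeneous_X _ _))

lemma count_lines : ∀ (n : ℕ) (T : Finset (ℂ × ℂ)) (W : S2), W ≠ 0 → W.IsHomogeneous n →
    (∀ c ∈ T, c ≠ 0) → (∀ c ∈ T, ∀ c' ∈ T, c ≠ c' → ∀ μ : ℂ, c' ≠ μ • c) →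
    (∀ c ∈ T, lf c ∣ W) → T.card ≤ n := by
  intro n
  induction n with
  | zero =>
    intro T W hW0 hW hT0 hTp hdvd
    rcases T.eq_empty_or_nonempty with rfl | ⟨c, hc⟩
    · simp
    exfalso
    have hWC : W = C (coeff 0 W) := by
      have := homogeneousComponent_of_mem ((mem_homogeneousSubmodule _ _).mpr hW) (m := 0)
      rw [if_pos rfl] at this
      rw [← homogeneousComponent_zero]; exact this.symm
    have hunit : IsUnit W := by
      rw [hWC]
      exact IsUnit.map (C : ℂ →+* S2)
        (Ne.isUnit (fun h => hW0 (by rw [hWC, h, map_zero])))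
    exact (lf_prime (hT0 c hc)).not_unit (isUnit_of_dvd_unit (hdvd c hc) hunit)
  | succ n ih =>
    intro T W hW0 hW hT0 hTp hdvd
    rcases T.eq_empty_or_nonempty with rfl | ⟨c, hc⟩
    · simp
    obtain ⟨W', hW'⟩ := hdvd c hc
    have hlc0 : lf c ≠ 0 := lf_ne_zero (hT0 c hc)
    have hW'0 : W' ≠ 0 := fun h => hW0 (by rw [hW', h, mul_zero])
    obtain ⟨m, hm, hW'h⟩ := homog_factor (lf_homog c) hlc0 hW'0 (hW' ▸ hW)
    have hmn : m = n := by omega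
    subst hmn
    have hstep : ∀ c' ∈ T.erase c, lf c' ∣ W' := by
      intro c' hc'
      have hc'T := Finset.mem_of_mem_erase hc'
      have hprime := lf_prime (hT0 c' hc'T)
      have hdvd' : lf c' ∣ lf c * W' := hW' ▸ hdvd c' hc'T
      rcases hprime.2.2 _ _ hdvd' with h | h
      · exfalso
        obtain ⟨u, hu⟩ := h
        have hu0 : u ≠ 0 := fun h0 => hlc0 (by rw [hu, h0, mul_zero])
        obtain ⟨k, hk1, hkh⟩ := homog_factor (lf_homog c') (lf_ne_zero (hT0 c' hc'T)) hu0
          (hu ▸ lf_homog c)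
        have hk0 : k = 0 := by omega
        subst hk0
        have huC : u = C (coeff 0 u) := by
          have := homogeneousComponent_of_mem ((mem_homogeneousSubmodule _ _).mpr hkh) (m := 0)
          rw [if_pos rfl] at this
          rw [← homogeneousComponent_zero]; exact this.symm
        set e := coeff 0 u with he
        have heq : lf c = C e * lf c' := by rw [hu, huC, mul_comm]
        have hdiff : (C (c.1 - e * c'.1) * X 0 + C (c.2 - e * c'.2) * X 1 : S2) = 0 := by
          simp only [map_sub, map_mul]
          have : lf c - C e * lf c' = 0 := by rw [heq]; ring
          rw [lf, lf] at this
          linear_combination this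
        obtain ⟨h1, h2⟩ := linform_coeffs _ _ hdiff
        have hne : c' ≠ c := Finset.ne_of_mem_erase hc'
        exact hTp c' hc'T c hc hne e
          (Prod.ext (by simpa using sub_eq_zero.mp h1) (by simpa using sub_eq_zero.mp h2))
      · exact h
    have hcard : (T.erase c).card ≤ m := by
      refine ih (T.erase c) W' hW'0 hW'h ?_ ?_ hstep
      · exact fun c' hc' => hT0 c' (Finset.mem_of_mem_erase hc')
      · exact fun c1 h1 c2 h2 hne μ =>
          hTp c1 (Finset.mem_of_mem_erase h1) c2 (Finset.mem_of_mem_erase h2) hne μ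
    have := Finset.card_erase_add_one hc
    omega

/-! ### Restriction to a hyperplane: frames and Wronskians -/

/-- A frame adapted to the linear form `v`: `B0, B1` is a basis of `ker v` with dual data. -/
structure Frame (v B0 B1 D0 D1 E : Fin 3 → ℂ) (γ : ℂ) : Prop where
  hId : ∀ i j, B0 i * D0 j + B1 i * D1 j + E i * (γ * v j) = if i = j then (1:ℂ) else 0
  hvB0 : ∑ i, v i * B0 i = 0
  hvB1 : ∑ i, v i * B1 i = 0
  hD0B0 : ∑ i, D0 i * B0 i = 1
  hD0B1 : ∑ i, D0 i * B1 i = 0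
  hD1B0 : ∑ i, D1 i * B0 i = 0
  hD1B1 : ∑ i, D1 i * B1 i = 1

lemma exists_frame {v : Fin 3 → ℂ} (hv : v ≠ 0) :
    ∃ B0 B1 D0 D1 E : Fin 3 → ℂ, ∃ γ : ℂ, Frame v B0 B1 D0 D1 E γ := by
  have : ∃ i, v i ≠ 0 := by
    by_contra h
    push_neg at h
    exact hv (funext h)
  obtain ⟨i0, hi0⟩ := this
  fin_cases i0
  · exact ⟨![-(v 1 / v 0), 1, 0], ![-(v 2 / v 0), 0, 1], ![0,1,0], ![0,0,1], ![1,0,0], (v 0)⁻¹,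
      by have h0 : v 0 ≠ 0 := hi0
         intro i j; fin_cases i <;> fin_cases j <;> simp <;> (try field_simp) <;> (try ring),
      by have h0 : v 0 ≠ 0 := hi0
         simp [Fin.sum_univ_three]; field_simp <;> ring,
      by have h0 : v 0 ≠ 0 := hi0
         simp [Fin.sum_univ_three]; field_simp <;> ring,
      by simp [Fin.sum_univ_three],
      by simp [Fin.sum_univ_three],
      by simp [Fin.sum_univ_three],
      by simp [Fin.sum_univ_three]⟩
  · exact ⟨![1, -(v 0 / v 1), 0], ![0, -(v 2 / v 1), 1], ![1,0,0], ![0,0,1], ![0,1,0], (v 1)⁻¹,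
      by have h0 : v 1 ≠ 0 := hi0
         intro i j; fin_cases i <;> fin_cases j <;> simp <;> (try field_simp) <;> (try ring),
      by have h0 : v 1 ≠ 0 := hi0
         simp [Fin.sum_univ_three]; field_simp <;> ring,
      by have h0 : v 1 ≠ 0 := hi0
         simp [Fin.sum_univ_three]; field_simp <;> ring,
      by simp [Fin.sum_univ_three],
      by simp [Fin.sum_univ_three],
      by simp [Fin.sum_univ_three],
      by simp [Fin.sum_univ_three]⟩
  · exact ⟨![1, 0, -(v 0 / v 2)], ![0, 1, -(v 1 / v 2)], ![1,0,0], ![0,1,0], ![0,0,1], (v 2)⁻¹,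
      by have h0 : v 2 ≠ 0 := hi0
         intro i j; fin_cases i <;> fin_cases j <;> simp <;> (try field_simp) <;> (try ring),
      by have h0 : v 2 ≠ 0 := hi0
         simp [Fin.sum_univ_three]; field_simp <;> ring,
      by have h0 : v 2 ≠ 0 := hi0
         simp [Fin.sum_univ_three]; field_simp <;> ring,
      by simp [Fin.sum_univ_three],
      by simp [Fin.sum_univ_three],
      by simp [Fin.sum_univ_three],
      by simp [Fin.sum_univ_three]⟩

/-- The restriction homomorphism `S3 → S2` induced by the parametrization `s B0 + t B1`. -/
def rr3 (B0 B1 : Fin 3 → ℂ) : S3 →ₐ[ℂ] S2 :=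
  MvPolynomial.aeval fun i => C (B0 i) * X 0 + C (B1 i) * X 1

/-- contraction of a coefficient vector with a basis vector -/
def cB (B : Fin 3 → ℂ) (w : Fin 3 → ℂ) : ℂ := ∑ i, w i * B i

/-- first/second component of the restricted derivation -/
def Psum (B0 B1 D : Fin 3 → ℂ) (θ : Fin 3 → S3) : S2 := ∑ j, C (D j) * rr3 B0 B1 (θ j)

/-- the Wronskian of the restricted derivation with the Euler field -/
def Wr (B0 B1 D0 D1 : Fin 3 → ℂ) (θ : Fin 3 → S3) : S2 :=
  Psum B0 B1 D0 θ * X 1 - Psum B0 B1 D1 θ * X 0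

variable {v B0 B1 D0 D1 E : Fin 3 → ℂ} {γ : ℂ}

lemma rr3_C (B0 B1 : Fin 3 → ℂ) (z : ℂ) : rr3 B0 B1 (MvPolynomial.C z) = C z := by
  simp [rr3, MvPolynomial.algebraMap_eq]

lemma rr3_lin3 (B0 B1 : Fin 3 → ℂ) (w : Fin 3 → ℂ) :
    rr3 B0 B1 (lin3 w) = C (cB B0 w) * X 0 + C (cB B1 w) * X 1 := by
  rw [lin3, map_sum]
  have h : ∀ i : Fin 3, rr3 B0 B1 (MvPolynomial.C (w i) * MvPolynomial.X i)
      = C (w i * B0 i) * X 0 + C (w i * B1 i) * X 1 := by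
    intro i
    rw [map_mul, rr3_C]
    show C (w i) * (MvPolynomial.aeval fun i => C (B0 i) * X 0 + C (B1 i) * X 1) (X i) = _
    rw [MvPolynomial.aeval_X]
    rw [map_mul, map_mul]
    ring
  rw [Finset.sum_congr rfl fun i _ => h i, Finset.sum_add_distrib, ← Finset.sum_mul,
    ← Finset.sum_mul, ← map_sum, ← map_sum, cB, cB]

lemma rr3_ev3 (B0 B1 : Fin 3 → ℂ) (θ : Fin 3 → S3) (w : Fin 3 → ℂ) :
    rr3 B0 B1 (ev3 θ w) = ∑ i, C (w i) * rr3 B0 B1 (θ i) := by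
  rw [ev3, map_sum]
  exact Finset.sum_congr rfl fun i _ => by rw [map_mul, rr3_C]

lemma zero_rel (F : Frame v B0 B1 D0 D1 E γ) {θ : Fin 3 → S3} (hθ : lin3 v ∣ ev3 θ v) :
    (∑ j, C (v j) * rr3 B0 B1 (θ j)) = 0 := by
  obtain ⟨h, hh⟩ := hθ
  rw [← rr3_ev3, hh, map_mul, rr3_lin3]
  rw [show cB B0 v = 0 from F.hvB0, show cB B1 v = 0 from F.hvB1]
  simp

lemma key_decomp (F : Frame v B0 B1 D0 D1 E γ) {θ : Fin 3 → S3} (hθ : lin3 v ∣ ev3 θ v)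
    (i : Fin 3) :
    rr3 B0 B1 (θ i) = C (B0 i) * Psum B0 B1 D0 θ + C (B1 i) * Psum B0 B1 D1 θ := by
  have hA : rr3 B0 B1 (θ i) = ∑ j, C (if i = j then (1:ℂ) else 0) * rr3 B0 B1 (θ j) := by
    rw [Finset.sum_eq_single i]
    · rw [if_pos rfl, map_one, one_mul]
    · intro j _ hj
      rw [if_neg (Ne.symm hj), map_zero, zero_mul]
    · intro h
      exact absurd (Finset.mem_univ i) h
  have hterm : ∀ j : Fin 3, C (if i = j then (1:ℂ) else 0) * rr3 B0 B1 (θ j)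
      = C (B0 i) * (C (D0 j) * rr3 B0 B1 (θ j)) + C (B1 i) * (C (D1 j) * rr3 B0 B1 (θ j))
        + (C (E i) * C γ) * (C (v j) * rr3 B0 B1 (θ j)) := by
    intro j
    rw [← F.hId i j]
    rw [map_add, map_add, map_mul, map_mul, map_mul, map_mul]
    ring
  rw [hA, Finset.sum_congr rfl fun j _ => hterm j, Finset.sum_add_distrib,
    Finset.sum_add_distrib, ← Finset.mul_sum, ← Finset.mul_sum, ← Finset.mul_sum,
    zero_rel F hθ, mul_zero, add_zero, Psum, Psum]

lemma dvd_PQ (F : Frame v B0 B1 D0 D1 E γ) {θ : Fin 3 → S3} (hθv : lin3 v ∣ ev3 θ v)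
    {w : Fin 3 → ℂ} (hθw : lin3 w ∣ ev3 θ w) :
    (C (cB B0 w) * X 0 + C (cB B1 w) * X 1 : S2) ∣
      C (cB B0 w) * Psum B0 B1 D0 θ + C (cB B1 w) * Psum B0 B1 D1 θ := by
  have h0 : rr3 B0 B1 (ev3 θ w)
      = C (cB B0 w) * Psum B0 B1 D0 θ + C (cB B1 w) * Psum B0 B1 D1 θ := by
    rw [rr3_ev3]
    have hterm : ∀ i : Fin 3, C (w i) * rr3 B0 B1 (θ i)
        = (C (w i * B0 i)) * Psum B0 B1 D0 θ + (C (w i * B1 i)) * Psum B0 B1 D1 θ := by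
      intro i
      rw [key_decomp F hθv i, map_mul, map_mul]
      ring
    rw [Finset.sum_congr rfl fun i _ => hterm i, Finset.sum_add_distrib, ← Finset.sum_mul,
      ← Finset.sum_mul, ← map_sum, ← map_sum, cB, cB]
  rw [← h0, ← rr3_lin3 B0 B1 w]
  exact map_dvd (rr3 B0 B1).toRingHom hθw

lemma dvd_W (F : Frame v B0 B1 D0 D1 E γ) {θ : Fin 3 → S3} (hθv : lin3 v ∣ ev3 θ v)
    {w : Fin 3 → ℂ} (hθw : lin3 w ∣ ev3 θ w) (hw : ¬(cB B0 w = 0 ∧ cB B1 w = 0)) :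
    (C (cB B0 w) * X 0 + C (cB B1 w) * X 1 : S2) ∣ Wr B0 B1 D0 D1 θ := by
  set c0 := cB B0 w
  set c1 := cB B1 w
  set P := Psum B0 B1 D0 θ
  set Q := Psum B0 B1 D1 θ
  set L : S2 := C c0 * X 0 + C c1 * X 1 with hL
  have hdvd0 : L ∣ C c0 * Wr B0 B1 D0 D1 θ := by
    have hident : C c0 * Wr B0 B1 D0 D1 θ
        = X 1 * (C c0 * P + C c1 * Q) - Q * L := by rw [Wr, hL]; ring
    rw [hident]
    exact dvd_sub ((dvd_PQ F hθv hθw).mul_left (X 1)) (Dvd.intro_left Q rfl)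
  have hdvd1 : L ∣ C c1 * Wr B0 B1 D0 D1 θ := by
    have hident : C c1 * Wr B0 B1 D0 D1 θ
        = (- X 0) * (C c0 * P + C c1 * Q) + P * L := by rw [Wr, hL]; ring
    rw [hident]
    exact dvd_add ((dvd_PQ F hθv hθw).mul_left (-X 0)) (Dvd.intro_left P rfl)
  by_cases hc0 : c0 = 0
  · have hc1 : c1 ≠ 0 := fun h => hw ⟨hc0, h⟩
    have hu : IsUnit (C c1 : S2) := (Ne.isUnit hc1).map (C : ℂ →+* S2)
    exact hu.dvd_mul_left.mp hdvd1
  · have hu : IsUnit (C c0 : S2) := (Ne.isUnit hc0).map (C : ℂ →+* S2)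
    exact hu.dvd_mul_left.mp hdvd0

lemma Psum_add (D : Fin 3 → ℂ) (θ η : Fin 3 → S3) :
    Psum B0 B1 D (θ + η) = Psum B0 B1 D θ + Psum B0 B1 D η := by
  rw [Psum, Psum, Psum, ← Finset.sum_add_distrib]
  exact Finset.sum_congr rfl fun j _ => by rw [Pi.add_apply, map_add]; ring

lemma Psum_smul (D : Fin 3 → ℂ) (c : S3) (θ : Fin 3 → S3) :
    Psum B0 B1 D (c • θ) = rr3 B0 B1 c * Psum B0 B1 D θ := by
  rw [Psum, Psum, Finset.mul_sum]
  exact Finset.sum_congr rfl fun j _ => by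
    rw [Pi.smul_apply, smul_eq_mul, map_mul]; ring

lemma Wr_add (θ η : Fin 3 → S3) :
    Wr B0 B1 D0 D1 (θ + η) = Wr B0 B1 D0 D1 θ + Wr B0 B1 D0 D1 η := by
  simp only [Wr, Psum_add]; ring

lemma Wr_smul (c : S3) (θ : Fin 3 → S3) :
    Wr B0 B1 D0 D1 (c • θ) = rr3 B0 B1 c * Wr B0 B1 D0 D1 θ := by
  simp only [Wr, Psum_smul]; ring

lemma Wr_zero : Wr B0 B1 D0 D1 (0 : Fin 3 → S3) = 0 := by
  simp [Wr, Psum]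

lemma Psum_euler (D : Fin 3 → ℂ) :
    Psum B0 B1 D eulerD = C (∑ i, D i * B0 i) * X 0 + C (∑ i, D i * B1 i) * X 1 := by
  rw [Psum]
  have h : ∀ j : Fin 3, C (D j) * rr3 B0 B1 (eulerD j)
      = C (D j * B0 j) * X 0 + C (D j * B1 j) * X 1 := by
    intro j
    show C (D j) * (MvPolynomial.aeval fun i => C (B0 i) * X 0 + C (B1 i) * X 1) (X j) = _
    rw [MvPolynomial.aeval_X, map_mul, map_mul]
    ring
  rw [Finset.sum_congr rfl fun j _ => h j, Finset.sum_add_distrib, ← Finset.sum_mul,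
    ← Finset.sum_mul, ← map_sum, ← map_sum]

lemma Wr_euler (F : Frame v B0 B1 D0 D1 E γ) : Wr B0 B1 D0 D1 eulerD = 0 := by
  rw [Wr, Psum_euler, Psum_euler, F.hD0B0, F.hD0B1, F.hD1B0, F.hD1B1]
  simp
  ring

lemma rr3_homog {k : ℕ} {f : S3} (hf : f.IsHomogeneous k) (B0 B1 : Fin 3 → ℂ) :
    (rr3 B0 B1 f).IsHomogeneous k := by
  have := hf.aeval (fun i => (C (B0 i) * X 0 + C (B1 i) * X 1 : S2)) (n := 1)
    (fun i => by
      simpa using (MvPolynomial.isHomogeneous_C_mul_X (B0 i) 0).add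
        (MvPolynomial.isHomogeneous_C_mul_X (B1 i) 1))
  simpa [rr3] using this

lemma Psum_homog (D : Fin 3 → ℂ) {k : ℕ} {θ : Fin 3 → S3} (hθ : HomDeg3 θ k) :
    (Psum B0 B1 D θ).IsHomogeneous k := by
  rw [Psum]
  exact MvPolynomial.IsHomogeneous.sum _ _ _
    fun j _ => (rr3_homog (hθ j) B0 B1).C_mul (D j)

lemma Wr_homog {k : ℕ} {θ : Fin 3 → S3} (hθ : HomDeg3 θ k) :
    (Wr B0 B1 D0 D1 θ).IsHomogeneous (k + 1) := by
  rw [Wr]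
  exact ((Psum_homog D0 hθ).mul (MvPolynomial.isHomogeneous_X _ _)).sub
    ((Psum_homog D1 hθ).mul (MvPolynomial.isHomogeneous_X _ _))
lemma w_prop (F : Frame v B0 B1 D0 D1 E γ) {w : Fin 3 → ℂ} (h0 : cB B0 w = 0)
    (h1 : cB B1 w = 0) : w = ((∑ i, w i * E i) * γ) • v := by
  rw [cB] at h0 h1
  funext j
  rw [Pi.smul_apply, smul_eq_mul]
  have hA : (∑ i, w i * (if i = j then (1:ℂ) else 0)) = w j := by
    rw [Finset.sum_eq_single j (fun i _ hij => by rw [if_neg hij, mul_zero])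
      (fun h => absurd (Finset.mem_univ j) h), if_pos rfl, mul_one]
  rw [← hA, Finset.sum_congr rfl (fun i (_ : i ∈ Finset.univ) => by rw [← F.hId i j])]
  have hsplit : ∑ i, w i * (B0 i * D0 j + B1 i * D1 j + E i * (γ * v j))
      = (∑ i, w i * B0 i) * D0 j + (∑ i, w i * B1 i) * D1 j
        + (∑ i, w i * E i) * (γ * v j) := by
    rw [Finset.sum_congr rfl (fun i (_ : i ∈ Finset.univ) =>
      (by ring : w i * (B0 i * D0 j + B1 i * D1 j + E i * (γ * v j))
        = w i * B0 i * D0 j + w i * B1 i * D1 j + w i * E i * (γ * v j))),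
      Finset.sum_add_distrib, Finset.sum_add_distrib, ← Finset.sum_mul, ← Finset.sum_mul,
      ← Finset.sum_mul]
  rw [hsplit, h0, h1]
  ring

lemma restr_ne (A : Arr) (hv : v ∈ A.hyps) (F : Frame v B0 B1 D0 D1 E γ)
    {w : Fin 3 → ℂ} (hw : w ∈ A.hyps) (hwv : w ≠ v) : ¬(cB B0 w = 0 ∧ cB B1 w = 0) := by
  rintro ⟨h0, h1⟩
  exact hwv (A.nonprop v hv w hw ⟨_, w_prop F h0 h1⟩)

lemma rep_decomp (F : Frame v B0 B1 D0 D1 E γ) {p : PP} (hp : pOn v p) (i : Fin 3) :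
    p.rep i = (∑ j, D0 j * p.rep j) * B0 i + (∑ j, D1 j * p.rep j) * B1 i := by
  have hA : (∑ j, (if i = j then (1:ℂ) else 0) * p.rep j) = p.rep i := by
    rw [Finset.sum_eq_single i (fun j _ hj => by rw [if_neg (Ne.symm hj), zero_mul])
      (fun h => absurd (Finset.mem_univ i) h), if_pos rfl, one_mul]
  rw [← hA, Finset.sum_congr rfl (fun j (_ : j ∈ Finset.univ) => by rw [← F.hId i j])]
  have hsplit : ∑ j, (B0 i * D0 j + B1 i * D1 j + E i * (γ * v j)) * p.rep j
      = (∑ j, D0 j * p.rep j) * B0 i + (∑ j, D1 j * p.rep j) * B1 i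
        + (E i * γ) * (∑ j, v j * p.rep j) := by
    rw [Finset.sum_congr rfl (fun j (_ : j ∈ Finset.univ) =>
      (by ring : (B0 i * D0 j + B1 i * D1 j + E i * (γ * v j)) * p.rep j
        = D0 j * p.rep j * B0 i + D1 j * p.rep j * B1 i + (E i * γ) * (v j * p.rep j))),
      Finset.sum_add_distrib, Finset.sum_add_distrib, ← Finset.sum_mul, ← Finset.sum_mul,
      ← Finset.mul_sum]
  rw [hsplit, show (∑ j, v j * p.rep j) = 0 from hp, mul_zero, add_zero]

lemma st_ne (F : Frame v B0 B1 D0 D1 E γ) {p : PP} (hp : pOn v p) :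
    ¬((∑ j, D0 j * p.rep j) = 0 ∧ (∑ j, D1 j * p.rep j) = 0) := by
  rintro ⟨h0, h1⟩
  apply p.rep_nonzero
  funext i
  rw [Pi.zero_apply, rep_decomp F hp i, h0, h1, zero_mul, zero_mul, add_zero]

lemma orth (F : Frame v B0 B1 D0 D1 E γ) {p : PP} (hp : pOn v p) {w : Fin 3 → ℂ}
    (hw : pOn w p) :
    cB B0 w * (∑ j, D0 j * p.rep j) + cB B1 w * (∑ j, D1 j * p.rep j) = 0 := by
  have hw' : ∑ i, w i * p.rep i = 0 := hw
  have h2 : ∑ i, w i * p.rep i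
      = (∑ j, D0 j * p.rep j) * (∑ i, w i * B0 i)
        + (∑ j, D1 j * p.rep j) * (∑ i, w i * B1 i) := by
    rw [Finset.sum_congr rfl (fun i (_ : i ∈ Finset.univ) =>
      (show w i * p.rep i = (∑ j, D0 j * p.rep j) * (w i * B0 i)
          + (∑ j, D1 j * p.rep j) * (w i * B1 i) from by rw [rep_decomp F hp i]; ring)),
      Finset.sum_add_distrib, ← Finset.mul_sum, ← Finset.mul_sum]
  rw [cB, cB]
  linear_combination hw' - h2

lemma point_eq (F : Frame v B0 B1 D0 D1 E γ) {p q : PP} (hp : pOn v p) (hq : pOn v q)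
    {c0 c1 : ℂ} (hc : ¬(c0 = 0 ∧ c1 = 0))
    (h1 : c0 * (∑ j, D0 j * p.rep j) + c1 * (∑ j, D1 j * p.rep j) = 0)
    (h2 : c0 * (∑ j, D0 j * q.rep j) + c1 * (∑ j, D1 j * q.rep j) = 0) : p = q := by
  set sp := ∑ j, D0 j * p.rep j with hsp
  set tp := ∑ j, D1 j * p.rep j with htp
  set sq := ∑ j, D0 j * q.rep j with hsq
  set tq := ∑ j, D1 j * q.rep j with htq
  have hpne := st_ne F hp
  have hqne := st_ne F hq
  rw [← hsp, ← htp] at hpne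
  rw [← hsq, ← htq] at hqne
  obtain ⟨k, hk0, hks, hkt⟩ : ∃ k : ℂ, k ≠ 0 ∧ sq = k * sp ∧ tq = k * tp := by
    by_cases hc0 : c0 = 0
    · have hc1 : c1 ≠ 0 := fun h => hc ⟨hc0, h⟩
      have htp0 : tp = 0 := by
        have := h1; rw [hc0, zero_mul, zero_add] at this
        exact (mul_eq_zero.mp this).resolve_left hc1
      have htq0 : tq = 0 := by
        have := h2; rw [hc0, zero_mul, zero_add] at this
        exact (mul_eq_zero.mp this).resolve_left hc1
      have hsp0 : sp ≠ 0 := fun h => hpne ⟨h, htp0⟩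
      have hsq0 : sq ≠ 0 := fun h => hqne ⟨h, htq0⟩
      exact ⟨sq / sp, div_ne_zero hsq0 hsp0, by field_simp, by rw [htp0, htq0, mul_zero]⟩
    · have htp0 : tp ≠ 0 := by
        intro h
        apply hpne
        refine ⟨?_, h⟩
        have := h1; rw [h, mul_zero, add_zero] at this
        exact (mul_eq_zero.mp this).resolve_left hc0
      have htq0 : tq ≠ 0 := by
        intro h
        apply hqne
        refine ⟨?_, h⟩
        have := h2; rw [h, mul_zero, add_zero] at this
        exact (mul_eq_zero.mp this).resolve_left hc0
      refine ⟨tq / tp, div_ne_zero htq0 htp0, ?_, by field_simp⟩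
      have hsp' : c0 * sp = -(c1 * tp) := by linear_combination h1
      have hsq' : c0 * sq = -(c1 * tq) := by linear_combination h2
      field_simp
      have : c0 * (sq * tp) = c0 * (tq * sp) := by
        calc c0 * (sq * tp) = (c0 * sq) * tp := by ring
        _ = -(c1 * tq) * tp := by rw [hsq']
        _ = -(c1 * tp) * tq := by ring
        _ = (c0 * sp) * tq := by rw [hsp']
        _ = c0 * (tq * sp) := by ring
      exact mul_left_cancel₀ hc0 this
  have hrep : (fun i => k • p.rep i) = q.rep := by
    funext i
    rw [smul_eq_mul, rep_decomp F hp i, rep_decomp F hq i, ← hsp, ← htp, ← hsq, ← htq,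
      hks, hkt]
    ring
  have : q = p := by
    rw [← Projectivization.mk_rep p, ← Projectivization.mk_rep q]
    exact (Projectivization.mk_eq_mk_iff' ℂ _ _ q.rep_nonzero p.rep_nonzero).mpr
      ⟨k, by funext i; exact congrFun hrep i⟩
  exact this.symm

/-- Let `A` be a nearly free line arrangement in `ℂ³` with exponents
`(a, b)`, `a ≤ b`. Then for every `H ∈ A`, `n_H ≤ b + 1`. -/
theorem stmt6 (A : Arr) (a b : ℕ) (hab : a ≤ b) (hnf : IsNearlyFree A a b) :
    ∀ v ∈ A.hyps, nPoints A v ≤ b + 1 := by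
  intro v hv
  obtain ⟨θ₂, θ₃, φ, h2, h3, hφ, hspan, -, -, -, -, -⟩ := hnf
  have hv0 : v ≠ 0 := A.forms_ne v hv
  obtain ⟨B0, B1, D0, D1, E, γ, F⟩ := exists_frame hv0
  have hDA : ∀ θ : Fin 3 → S3, θ ∈ DA A → ∀ w ∈ A.hyps, lin3 w ∣ ev3 θ w := fun θ hθ => hθ
  have hmem2 : θ₂ ∈ DA A := by
    rw [← hspan]; exact Submodule.subset_span (by simp)
  have hmem3 : θ₃ ∈ DA A := by
    rw [← hspan]; exact Submodule.subset_span (by simp)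
  have hmemφ : φ ∈ DA A := by
    rw [← hspan]; exact Submodule.subset_span (by simp)
  have hstar : ∃ (θg : Fin 3 → S3) (k : ℕ),
      θg ∈ DA A ∧ HomDeg3 θg k ∧ k ≤ b ∧ Wr B0 B1 D0 D1 θg ≠ 0 := by
    by_cases hW2 : Wr B0 B1 D0 D1 θ₂ ≠ 0
    · exact ⟨θ₂, a, hmem2, h2, hab, hW2⟩
    by_cases hW3 : Wr B0 B1 D0 D1 θ₃ ≠ 0
    · exact ⟨θ₃, b, hmem3, h3, le_refl b, hW3⟩
    by_cases hWφ : Wr B0 B1 D0 D1 φ ≠ 0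
    · exact ⟨φ, b, hmemφ, hφ, le_refl b, hWφ⟩
    exfalso
    push_neg at hW2 hW3 hWφ
    have hall : ∀ θ ∈ DA A, Wr B0 B1 D0 D1 θ = 0 := by
      intro θ hθ
      rw [← hspan] at hθ
      induction hθ using Submodule.span_induction with
      | mem x hx =>
        simp only [Set.mem_insert_iff, Set.mem_singleton_iff] at hx
        rcases hx with rfl | rfl | rfl | rfl
        · exact Wr_euler F
        · exact hW2
        · exact hW3
        · exact hWφ
      | zero => exact Wr_zero
      | add x y hx hy hxp hyp => rw [Wr_add, hxp, hyp, add_zero]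
      | smul c x hx hxp => rw [Wr_smul, hxp, mul_zero]
    set Pi0 : S3 := ∏ w ∈ A.hyps.erase v, lin3 w with hPi
    set θs : Fin 3 → S3 := fun i => Pi0 * MvPolynomial.C (B0 i) with hθs
    have hθsDA : θs ∈ DA A := by
      intro w hw
      show lin3 w ∣ ev3 θs w
      have hev : ev3 θs w = Pi0 * MvPolynomial.C (cB B0 w) := by
        rw [ev3, Finset.sum_congr rfl (fun i (_ : i ∈ Finset.univ) =>
          (show MvPolynomial.C (w i) * θs i = Pi0 * MvPolynomial.C (w i * B0 i) from by
            rw [hθs]; dsimp only; rw [map_mul]; ring)), ← Finset.mul_sum, ← map_sum, cB]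
      rw [hev]
      by_cases hwv : w = v
      · subst hwv
        rw [show cB B0 w = 0 from F.hvB0, map_zero, mul_zero]
        exact dvd_zero _
      · exact Dvd.dvd.mul_right
          (Finset.dvd_prod_of_mem _ (Finset.mem_erase.mpr ⟨hwv, hw⟩)) _
    have hPs : Psum B0 B1 D0 θs = rr3 B0 B1 Pi0 := by
      rw [Psum, Finset.sum_congr rfl (fun j (_ : j ∈ Finset.univ) =>
        (show C (D0 j) * rr3 B0 B1 (θs j) = rr3 B0 B1 Pi0 * C (D0 j * B0 j) from by
          rw [hθs]; dsimp only; rw [map_mul, rr3_C, map_mul]; ring)),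
        ← Finset.mul_sum, ← map_sum, F.hD0B0, map_one, mul_one]
    have hQs : Psum B0 B1 D1 θs = 0 := by
      rw [Psum, Finset.sum_congr rfl (fun j (_ : j ∈ Finset.univ) =>
        (show C (D1 j) * rr3 B0 B1 (θs j) = rr3 B0 B1 Pi0 * C (D1 j * B0 j) from by
          rw [hθs]; dsimp only; rw [map_mul, rr3_C, map_mul]; ring)),
        ← Finset.mul_sum, ← map_sum, F.hD1B0, map_zero, mul_zero]
    have hWs : Wr B0 B1 D0 D1 θs = rr3 B0 B1 Pi0 * X 1 := by
      rw [Wr, hPs, hQs, zero_mul, sub_zero]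
    have hPine : rr3 B0 B1 Pi0 ≠ 0 := by
      rw [hPi, map_prod]
      apply Finset.prod_ne_zero_iff.mpr
      intro w hw
      rw [rr3_lin3]
      exact linform_ne_zero
        (restr_ne A hv F (Finset.mem_of_mem_erase hw) (Finset.ne_of_mem_erase hw))
    have hzero := hall θs hθsDA
    rw [hWs] at hzero
    exact (mul_ne_zero hPine (MvPolynomial.X_ne_zero (σ := Fin 2) (R := ℂ) 1)) hzero
  obtain ⟨θg, k, hgDA, hgHom, hkb, hWne⟩ := hstar
  have hWhom : (Wr B0 B1 D0 D1 θg).IsHomogeneous (k + 1) := Wr_homog hgHom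
  set S : Set PP := {p : PP | pOn v p ∧ ∃ w ∈ A.hyps, w ≠ v ∧ pOn w p} with hSdef
  set TF : Finset (ℂ × ℂ) := (A.hyps.erase v).image (fun w => ((cB B0 w, cB B1 w) : ℂ × ℂ))
    with hTF
  have hchoice : ∀ p ∈ S, ∃ c : ℂ × ℂ, c ∈ TF ∧ c ≠ 0 ∧
      (c.1 * (∑ j, D0 j * p.rep j) + c.2 * (∑ j, D1 j * p.rep j) = 0) ∧
      lf c ∣ Wr B0 B1 D0 D1 θg := by
    intro p hp
    obtain ⟨hpv, w, hw, hwv, hpw⟩ := hp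
    refine ⟨(cB B0 w, cB B1 w),
      Finset.mem_image_of_mem _ (Finset.mem_erase.mpr ⟨hwv, hw⟩), ?_, ?_, ?_⟩
    · intro h
      exact restr_ne A hv F hw hwv ⟨congrArg Prod.fst h, congrArg Prod.snd h⟩
    · exact orth F hpv hpw
    · show (C (cB B0 w) * X 0 + C (cB B1 w) * X 1 : S2) ∣ Wr B0 B1 D0 D1 θg
      exact dvd_W F (hDA θg hgDA v hv) (hDA θg hgDA w hw) (restr_ne A hv F hw hwv)
  classical
  set g : PP → ℂ × ℂ := fun p => if hp : p ∈ S then (hchoice p hp).choose else 0 with hgdef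
  have hgTF : ∀ p ∈ S, g p ∈ TF := by
    intro p hp
    rw [hgdef]; dsimp only; rw [dif_pos hp]
    exact (hchoice p hp).choose_spec.1
  have hg0 : ∀ p ∈ S, g p ≠ 0 := by
    intro p hp
    rw [hgdef]; dsimp only; rw [dif_pos hp]
    exact (hchoice p hp).choose_spec.2.1
  have hgorth : ∀ p ∈ S,
      (g p).1 * (∑ j, D0 j * p.rep j) + (g p).2 * (∑ j, D1 j * p.rep j) = 0 := by
    intro p hp
    rw [hgdef]; dsimp only; rw [dif_pos hp]
    exact (hchoice p hp).choose_spec.2.2.1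
  have hgdvd : ∀ p ∈ S, lf (g p) ∣ Wr B0 B1 D0 D1 θg := by
    intro p hp
    rw [hgdef]; dsimp only; rw [dif_pos hp]
    exact (hchoice p hp).choose_spec.2.2.2
  have hpair_ne : ∀ c : ℂ × ℂ, c ≠ 0 → ¬(c.1 = 0 ∧ c.2 = 0) :=
    fun c hc h => hc (Prod.ext h.1 h.2)
  have hinj : Set.InjOn g S := by
    intro p hp q hq h
    refine point_eq F hp.1 hq.1 (hpair_ne _ (hg0 p hp)) (hgorth p hp) ?_
    rw [h]
    exact hgorth q hq
  have hSfin : S.Finite := by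
    apply Set.Finite.of_finite_image ?_ hinj
    exact Set.Finite.subset (Finset.finite_toSet TF)
      (by rintro c ⟨p, hp, rfl⟩; exact hgTF p hp)
  have himg : (g '' S).Finite := hSfin.image g
  have hcard : himg.toFinset.card ≤ k + 1 := by
    apply count_lines (k + 1) himg.toFinset (Wr B0 B1 D0 D1 θg) hWne hWhom
    · intro c hc
      rw [Set.Finite.mem_toFinset] at hc
      obtain ⟨p, hp, rfl⟩ := hc
      exact hg0 p hp
    · intro c hc c' hc' hne μ hμ
      rw [Set.Finite.mem_toFinset] at hc hc'
      obtain ⟨p, hp, rfl⟩ := hc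
      obtain ⟨q, hq, rfl⟩ := hc'
      have hμ0 : μ ≠ 0 := by
        intro h0
        apply hg0 q hq
        rw [hμ, h0, zero_smul]
      apply hne
      have hrel : (g p).1 * (∑ j, D0 j * q.rep j) + (g p).2 * (∑ j, D1 j * q.rep j) = 0 := by
        have := hgorth q hq
        rw [hμ] at this
        have h1 : (μ • g p).1 = μ * (g p).1 := rfl
        have h2 : (μ • g p).2 = μ * (g p).2 := rfl
        rw [h1, h2] at this
        have hfac : μ * ((g p).1 * (∑ j, D0 j * q.rep j)
            + (g p).2 * (∑ j, D1 j * q.rep j)) = 0 := by linear_combination this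
        exact (mul_eq_zero.mp hfac).resolve_left hμ0
      have hpq : p = q := point_eq F hp.1 hq.1 (hpair_ne _ (hg0 p hp)) (hgorth p hp) hrel
      rw [hpq]
    · intro c hc
      rw [Set.Finite.mem_toFinset] at hc
      obtain ⟨p, hp, rfl⟩ := hc
      exact hgdvd p hp
  have hn1 : nPoints A v = S.ncard := rfl
  have hn2 : S.ncard = (g '' S).ncard := (Set.ncard_image_of_injOn hinj).symm
  have hn3 : (g '' S).ncard = himg.toFinset.card := Set.ncard_eq_toFinset_card _ himg
  omega
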